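/- Let μ > 0 and let B̄, P be real numbers with B̄ ≠ 0, P(P + 2μ) = −B̄, and P > −2μ. Define H(z) = 1 + P z. Then H(z) > 0 for all z ∈ [0, (2μ)^{-1}], H(0) = 1, and for all z ∈ (0, (2μ)^{-1}): d/dz ( (1 − 2μ z) · H'(z)/H(z) ) = B̄ · H(z)^{−2}. -/

import Mathlib

open scoped BigOperators

/-- The linear polynomial `H(z) = 1 + P z` with `P(P + 2μ) = −B̄`, `P > −2μ` solves the
black-brane master equation `d/dz((1 − 2μz) H'/H) = B̄ H^{−2}` (orthogonal case,
Lie algebra `A_1 ⊕ ⋯ ⊕ A_1`), is positive on `[0, (2μ)^{-1}]` and satisfies `H(0) = 1`. -/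
theorem stmt18 (μ Bbar P : ℝ) (hμ : 0 < μ) (hB : Bbar ≠ 0)
    (hP : P * (P + 2 * μ) = -Bbar) (hPgt : -2 * μ < P)
    (H : ℝ → ℝ) (hH : ∀ z, H z = 1 + P * z) :
    (∀ z ∈ Set.Icc (0 : ℝ) (2 * μ)⁻¹, 0 < H z) ∧
    H 0 = 1 ∧
    (∀ z ∈ Set.Ioo (0 : ℝ) (2 * μ)⁻¹,
      deriv (fun w => (1 - 2 * μ * w) * (deriv H w / H w)) z = Bbar / (H z) ^ 2) := by
  have hHfun : H = fun z => 1 + P * z := funext hH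
  subst hHfun
  have hpos : ∀ z ∈ Set.Icc (0 : ℝ) (2 * μ)⁻¹, 0 < 1 + P * z := by
    rintro z ⟨hz0, hz1⟩
    rcases le_or_gt 0 P with hp | hp
    · nlinarith
    · have : P * z ≥ P * (2 * μ)⁻¹ := by nlinarith
      have h2 : P * (2 * μ)⁻¹ > -1 := by
        rw [gt_iff_lt, ← div_eq_mul_inv, lt_div_iff₀ (by positivity)]
        nlinarith
      linarith
  refine ⟨hpos, by norm_num, ?_⟩
  have hd : deriv (fun z : ℝ => 1 + P * z) = fun _ => P := by
    funext w
    simpa using ((hasDerivAt_id w).const_mul P).const_add 1 |>.deriv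
  rintro z ⟨hz0, hz1⟩
  have hzne : (1 + P * z) ≠ 0 := ne_of_gt (hpos z ⟨le_of_lt hz0, le_of_lt hz1⟩)
  simp only [hd]
  have h1 : HasDerivAt (fun w : ℝ => 1 - 2 * μ * w) (-(2 * μ)) z := by
    simpa using ((hasDerivAt_id z).const_mul (2 * μ)).const_sub 1
  have h2 : HasDerivAt (fun w : ℝ => P / (1 + P * w))
      ((0 * (1 + P * z) - P * P) / (1 + P * z) ^ 2) z := by
    simpa using (hasDerivAt_const z P).fun_div (((hasDerivAt_id z).const_mul P).const_add 1) hzne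
  have h3 := h1.fun_mul h2
  have hB' : Bbar = -(P * (P + 2 * μ)) := by linarith
  rw [h3.deriv, hB']
  field_simp
  ring
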